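/- Let m = C(t−1,3) + C(t−2,2) − 1 and let G be a 3-uniform hypergraph on t vertices with m edges whose restriction to [t−1] equals H₁ = [t−1]^{(3)} ∖ {(t−3)(t−2)(t−1)}. If E(G) contains all triples {i, j, t} with 2 ≤ i < j ≤ t−1, then G is not dense. -/

import Mathlib

structure UHypergraph (r : ℕ) where
  verts : Finset ℕ
  edges : Finset (Finset ℕ)
  edge_sub : ∀ e ∈ edges, e ⊆ verts
  edge_card : ∀ e ∈ edges, e.card = r

namespace UHypergraph

variable {r : ℕ}

/-- The polynomial value `λ(E, x) = Σ_{e ∈ E} Π_{i ∈ e} x_i`. -/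
def polyValue (E : Finset (Finset ℕ)) (x : ℕ → ℝ) : ℝ :=
  ∑ e ∈ E, ∏ i ∈ e, x i

/-- A legal weighting: nonnegative, supported on the vertex set, summing to 1. -/
def LegalWeighting (G : UHypergraph r) (x : ℕ → ℝ) : Prop :=
  (∀ i, 0 ≤ x i) ∧ (∀ i ∉ G.verts, x i = 0) ∧ ∑ i ∈ G.verts, x i = 1

/-- The Lagrangian of a hypergraph. -/
noncomputable def lagrangian (G : UHypergraph r) : ℝ :=
  sSup {l : ℝ | ∃ x, G.LegalWeighting x ∧ l = polyValue G.edges x}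

/-- An optimum weighting attains the Lagrangian. -/
def IsOptimal (G : UHypergraph r) (x : ℕ → ℝ) : Prop :=
  G.LegalWeighting x ∧ polyValue G.edges x = G.lagrangian

def IsSubgraph (H G : UHypergraph r) : Prop :=
  H.verts ⊆ G.verts ∧ H.edges ⊆ G.edges

def IsProperSubgraph (H G : UHypergraph r) : Prop :=
  H.IsSubgraph G ∧ (H.verts ≠ G.verts ∨ H.edges ≠ G.edges)

/-- A hypergraph is dense if every proper subgraph has strictly smaller Lagrangian. -/
def Dense (G : UHypergraph r) : Prop :=
  ∀ H : UHypergraph r, H.IsProperSubgraph G → H.lagrangian < G.lagrangian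

/-- The link `E_i` of a vertex `i`. -/
def link (G : UHypergraph r) (i : ℕ) : Finset (Finset ℕ) :=
  (G.edges.filter fun e => i ∈ e).image fun e => e.erase i

/-- The pair link `E_{ij}`. -/
def pairLink (G : UHypergraph r) (i j : ℕ) : Finset (Finset ℕ) :=
  (G.edges.filter fun e => i ∈ e ∧ j ∈ e).image fun e => (e.erase i).erase j

/-- `E_{i \ j} = E_i ∩ E_j^c`. -/
def linkDiff (G : UHypergraph r) (i j : ℕ) : Finset (Finset ℕ) :=
  (G.link i).filter fun A => j ∉ A ∧ insert j A ∉ G.edges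

/-- `G` contains a clique of order `t`. -/
def HasClique (G : UHypergraph r) (t : ℕ) : Prop :=
  ∃ S ⊆ G.verts, S.card = t ∧ S.powersetCard r ⊆ G.edges

/-- `G` is left-compressed: replacing a vertex of an edge by a smaller vertex
not in the edge yields an edge. -/
def LeftCompressed (G : UHypergraph r) : Prop :=
  ∀ e ∈ G.edges, ∀ i j : ℕ, i ∈ G.verts → i < j → j ∈ e → i ∉ e →
    insert i (e.erase j) ∈ G.edges

/-- The subgraph induced on a vertex set `S`. -/
def induce (G : UHypergraph r) (S : Finset ℕ) : UHypergraph r :=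
  ⟨G.verts ∩ S, G.edges.filter fun e => e ⊆ S,
   fun e he => Finset.subset_inter (G.edge_sub e (Finset.mem_filter.mp he).1)
     (Finset.mem_filter.mp he).2,
   fun e he => G.edge_card e (Finset.mem_filter.mp he).1⟩

end UHypergraph

/-- The complete `r`-graph on vertex set `{1, …, t}`. -/
def completeHG (t r : ℕ) : UHypergraph r :=
  ⟨Finset.Icc 1 t, (Finset.Icc 1 t).powersetCard r,
   fun _ he => (Finset.mem_powersetCard.mp he).1,
   fun _ he => (Finset.mem_powersetCard.mp he).2⟩

/-- `H₁ = [t-1]^{(3)} \ {(t-3)(t-2)(t-1)}`. -/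
def H1 (t : ℕ) : UHypergraph 3 :=
  ⟨Finset.Icc 1 (t-1), (completeHG (t-1) 3).edges.erase {t-3, t-2, t-1},
   fun e he => (completeHG (t-1) 3).edge_sub e (Finset.mem_of_mem_erase he),
   fun e he => (completeHG (t-1) 3).edge_card e (Finset.mem_of_mem_erase he)⟩

namespace UHypergraph

lemma legal_le_one {r : ℕ} (G : UHypergraph r) {x : ℕ → ℝ}
    (hx : G.LegalWeighting x) (i : ℕ) : x i ≤ 1 := by
  obtain ⟨h0, hs, h1⟩ := hx
  by_cases hi : i ∈ G.verts
  · calc x i ≤ ∑ j ∈ G.verts, x j := Finset.single_le_sum (fun j _ => h0 j) hi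
      _ = 1 := h1
  · rw [hs i hi]; norm_num

lemma polyValue_le_card {r : ℕ} (G : UHypergraph r) {x : ℕ → ℝ}
    (hx : G.LegalWeighting x) :
    polyValue G.edges x ≤ (G.edges.card : ℝ) := by
  unfold polyValue
  calc ∑ e ∈ G.edges, ∏ i ∈ e, x i ≤ ∑ _e ∈ G.edges, (1:ℝ) :=
      Finset.sum_le_sum fun e _ => Finset.prod_le_one (fun i _ => hx.1 i)
        (fun i _ => legal_le_one G hx i)
    _ = G.edges.card := by simp

lemma bddAbove_lagSet {r : ℕ} (G : UHypergraph r) :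
    BddAbove {l : ℝ | ∃ x, G.LegalWeighting x ∧ l = polyValue G.edges x} := by
  refine ⟨(G.edges.card : ℝ), ?_⟩
  rintro l ⟨x, hx, rfl⟩
  exact polyValue_le_card G hx

lemma le_lagrangian {r : ℕ} (G : UHypergraph r) {x : ℕ → ℝ}
    (hx : G.LegalWeighting x) : polyValue G.edges x ≤ G.lagrangian :=
  le_csSup (bddAbove_lagSet G) ⟨x, hx, rfl⟩

lemma lagrangian_le {r : ℕ} (G : UHypergraph r) {M : ℝ} (x0 : ℕ → ℝ)
    (hx0 : G.LegalWeighting x0)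
    (h : ∀ x, G.LegalWeighting x → polyValue G.edges x ≤ M) :
    G.lagrangian ≤ M :=
  csSup_le ⟨_, x0, hx0, rfl⟩ (by rintro l ⟨x, hx, rfl⟩; exact h x hx)

/-- Deletion of a vertex. -/
def delVert {r : ℕ} (G : UHypergraph r) (v : ℕ) : UHypergraph r where
  verts := G.verts.erase v
  edges := G.edges.filter fun e => v ∉ e
  edge_sub e he := by
    rw [Finset.mem_filter] at he
    intro i hi
    exact Finset.mem_erase.mpr ⟨fun h => he.2 (h ▸ hi), G.edge_sub e he.1 hi⟩
  edge_card e he := G.edge_card e (Finset.mem_filter.mp he).1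

lemma delVert_proper {r : ℕ} (G : UHypergraph r) {v : ℕ} (hv : v ∈ G.verts) :
    (G.delVert v).IsProperSubgraph G :=
  ⟨⟨Finset.erase_subset _ _, Finset.filter_subset _ _⟩,
   Or.inl (fun h => (Finset.erase_eq_self.mp h) hv)⟩

end UHypergraph

set_option maxHeartbeats 1000000 in
/-- Proposition (a): if `m = C(t-1,3)+C(t-2,2)-1`, `G` is a 3-graph on `[t]`
with `m` edges, `G[[t-1]] = H₁`, and all triples `{i,j,t}` with
`2 ≤ i < j ≤ t-1` are edges of `G`, then `G` is not dense. -/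
theorem prop_a_not_dense {t m : ℕ} (ht : 5 ≤ t)
    (hm : m = (t - 1).choose 3 + (t - 2).choose 2 - 1)
    (G : UHypergraph 3) (hv : G.verts = Finset.Icc 1 t) (he : G.edges.card = m)
    (hres : G.edges.filter (fun e => e ⊆ Finset.Icc 1 (t - 1)) = (H1 t).edges)
    (hcontain : ∀ i j : ℕ, 2 ≤ i → i < j → j ≤ t - 1 →
      ({i, j, t} : Finset ℕ) ∈ G.edges) :
    ¬ G.Dense := by
  intro hdense
  have h1t : (1:ℕ) ≠ t := by omega
  have h1v : (1:ℕ) ∈ G.verts := by rw [hv]; rw [Finset.mem_Icc]; omega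
  have htv : t ∈ G.verts := by rw [hv]; rw [Finset.mem_Icc]; omega
  have hsub : ∀ e ∈ G.edges, e ⊆ Finset.Icc 1 t := by rw [← hv]; exact G.edge_sub
  -- Step 1: edge counting shows every edge containing t avoids 1.
  have hfilter_not : G.edges.filter (fun e => ¬ e ⊆ Finset.Icc 1 (t-1))
      = G.edges.filter (fun e => t ∈ e) := by
    apply Finset.filter_congr
    intro e heG
    constructor
    · intro h
      by_contra het
      apply h
      intro i hi
      have h2 := hsub e heG hi
      rw [Finset.mem_Icc] at h2
      rw [Finset.mem_Icc]
      have : i ≠ t := fun hh => het (hh ▸ hi)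
      omega
    · intro het h
      have := h het
      rw [Finset.mem_Icc] at this
      omega
  have hmem3 : ({t-3, t-2, t-1} : Finset ℕ) ∈ (completeHG (t-1) 3).edges := by
    rw [completeHG]
    rw [Finset.mem_powersetCard]
    constructor
    · intro i hi
      simp only [Finset.mem_insert, Finset.mem_singleton] at hi
      rw [Finset.mem_Icc]
      omega
    · rw [Finset.card_insert_of_notMem (by simp; omega),
        Finset.card_insert_of_notMem (by simp; omega), Finset.card_singleton]
  have hcomplete : (completeHG (t-1) 3).edges.card = (t-1).choose 3 := by
    rw [completeHG]
    rw [Finset.card_powersetCard, Nat.card_Icc]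
    congr 1
  have hH1card : (H1 t).edges.card = (t-1).choose 3 - 1 := by
    rw [H1]
    rw [Finset.card_erase_of_mem hmem3, hcomplete]
  have hchoosepos : 1 ≤ (t-1).choose 3 := Nat.choose_pos (by omega)
  have hFtcard : (G.edges.filter (fun e => t ∈ e)).card = (t-2).choose 2 := by
    have hpart := Finset.card_filter_add_card_filter_not
      (s := G.edges) (fun e => e ⊆ Finset.Icc 1 (t-1))
    rw [hfilter_not, hres, hH1card, he, hm] at hpart
    omega
  set T := ((Finset.Icc 2 (t-1)).powersetCard 2).image (insert t) with hT
  have hTcard : T.card = (t-2).choose 2 := by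
    have hinj : Set.InjOn (insert t) (((Finset.Icc 2 (t-1)).powersetCard 2 : Finset (Finset ℕ)) : Set (Finset ℕ)) := by
      intro p hp q hq hpq
      rw [Finset.mem_coe, Finset.mem_powersetCard] at hp hq
      have hp' : t ∉ p := fun h => by
        have := hp.1 h
        rw [Finset.mem_Icc] at this
        omega
      have hq' : t ∉ q := fun h => by
        have := hq.1 h
        rw [Finset.mem_Icc] at this
        omega
      rw [← Finset.erase_insert hp', hpq, Finset.erase_insert hq']
    rw [hT, Finset.card_image_of_injOn hinj, Finset.card_powersetCard, Nat.card_Icc]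
    have : t - 1 + 1 - 2 = t - 2 := by omega
    rw [this]
  have hTsub : T ⊆ G.edges.filter (fun e => t ∈ e) := by
    intro e heT
    rw [hT, Finset.mem_image] at heT
    obtain ⟨p, hp, rfl⟩ := heT
    obtain ⟨hps, hpc⟩ := Finset.mem_powersetCard.mp hp
    obtain ⟨i, j, hij, rfl⟩ := Finset.card_eq_two.mp hpc
    have hi := hps (Finset.mem_insert_self i {j})
    have hj := hps (Finset.mem_insert_of_mem (Finset.mem_singleton_self j))
    rw [Finset.mem_Icc] at hi hj
    rcases lt_or_gt_of_ne hij with h | h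
    · have hmem := hcontain i j hi.1 h hj.2
      refine Finset.mem_filter.mpr ⟨?_, Finset.mem_insert_self t _⟩
      convert hmem using 1
      ext a
      simp only [Finset.mem_insert, Finset.mem_singleton]
      tauto
    · have hmem := hcontain j i hj.1 h hi.2
      refine Finset.mem_filter.mpr ⟨?_, Finset.mem_insert_self t _⟩
      convert hmem using 1
      ext a
      simp only [Finset.mem_insert, Finset.mem_singleton]
      tauto
  have hFtT : G.edges.filter (fun e => t ∈ e) = T :=
    (Finset.eq_of_subset_of_card_le hTsub (by rw [hTcard, hFtcard])).symm
  have key : ∀ e ∈ G.edges, t ∈ e → 1 ∉ e := by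
    intro e heG het h1e
    have heT : e ∈ T := by
      rw [← hFtT]
      exact Finset.mem_filter.mpr ⟨heG, het⟩
    rw [hT, Finset.mem_image] at heT
    obtain ⟨p, hp, rfl⟩ := heT
    rcases Finset.mem_insert.mp h1e with h | h
    · omega
    · have := (Finset.mem_powersetCard.mp hp).1 h
      rw [Finset.mem_Icc] at this
      omega
  -- Step 2: weight shifting.
  set Gt := G.delVert t with hGtdef
  set G1 := G.delVert 1 with hG1def
  have hGtlt := hdense Gt (G.delVert_proper htv)
  have hG1lt := hdense G1 (G.delVert_proper h1v)
  set M := max Gt.lagrangian G1.lagrangian with hM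
  have hMlt : M < G.lagrangian := max_lt hGtlt hG1lt
  have hx0leg : G.LegalWeighting (fun i => if i = 1 then (1:ℝ) else 0) := by
    refine ⟨fun i => by dsimp only; split <;> norm_num, fun i hi => ?_, ?_⟩
    · have : i ≠ 1 := fun h => hi (h ▸ h1v)
      simp [this]
    · rw [Finset.sum_ite_eq' G.verts 1 (fun _ => (1:ℝ))]
      simp [h1v]
  have hbound : ∀ x, G.LegalWeighting x → UHypergraph.polyValue G.edges x ≤ M := by
    intro x hx
    obtain ⟨hxnn, hxs, hx1⟩ := hx
    set A := G.edges.filter (fun e => (1:ℕ) ∈ e) with hA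
    set B := G.edges.filter (fun e => t ∈ e) with hB
    set C := G.edges.filter (fun e => (1:ℕ) ∉ e ∧ t ∉ e) with hC
    have hBeq : (G.edges.filter fun e => (1:ℕ) ∉ e).filter (fun e => t ∈ e) = B := by
      rw [hB, Finset.filter_filter]
      apply Finset.filter_congr
      intro e heG
      constructor
      · exact fun h => h.2
      · exact fun h => ⟨key e heG h, h⟩
    have hCeq : (G.edges.filter fun e => (1:ℕ) ∉ e).filter (fun e => t ∉ e) = C := by
      rw [hC, Finset.filter_filter]
    have hsumE : ∀ f : Finset ℕ → ℝ, ∑ e ∈ G.edges, f e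
        = ∑ e ∈ A, f e + ∑ e ∈ B, f e + ∑ e ∈ C, f e := by
      intro f
      rw [← Finset.sum_filter_add_sum_filter_not G.edges (fun e => (1:ℕ) ∈ e) f,
        ← Finset.sum_filter_add_sum_filter_not
          (G.edges.filter fun e => (1:ℕ) ∉ e) (fun e => t ∈ e) f,
        hBeq, hCeq, ← hA, add_assoc]
    have hsumGt : ∀ f : Finset ℕ → ℝ, ∑ e ∈ Gt.edges, f e
        = ∑ e ∈ A, f e + ∑ e ∈ C, f e := by
      intro f
      have h1 : Gt.edges = G.edges.filter (fun e => t ∉ e) := rfl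
      rw [h1, ← Finset.sum_filter_add_sum_filter_not
        (G.edges.filter fun e => t ∉ e) (fun e => (1:ℕ) ∈ e) f]
      congr 1
      · apply Finset.sum_congr _ (fun _ _ => rfl)
        rw [hA, Finset.filter_filter]
        apply Finset.filter_congr
        intro e heG
        constructor
        · exact fun h => h.2
        · exact fun h => ⟨fun ht' => key e heG ht' h, h⟩
      · apply Finset.sum_congr _ (fun _ _ => rfl)
        rw [hC, Finset.filter_filter]
        apply Finset.filter_congr
        intro e heG
        tauto
    have hsumG1 : ∀ f : Finset ℕ → ℝ, ∑ e ∈ G1.edges, f e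
        = ∑ e ∈ B, f e + ∑ e ∈ C, f e := by
      intro f
      have h1 : G1.edges = G.edges.filter (fun e => (1:ℕ) ∉ e) := rfl
      rw [h1, ← Finset.sum_filter_add_sum_filter_not
        (G.edges.filter fun e => (1:ℕ) ∉ e) (fun e => t ∈ e) f, hBeq, hCeq]
    set a := ∑ e ∈ A, ∏ i ∈ e.erase 1, x i with ha
    set b := ∑ e ∈ B, ∏ i ∈ e.erase t, x i with hb
    set s0 := ∑ e ∈ C, ∏ i ∈ e, x i with hs0
    have ha0 : 0 ≤ a := Finset.sum_nonneg fun e _ =>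
      Finset.prod_nonneg fun i _ => hxnn i
    have hb0 : 0 ≤ b := Finset.sum_nonneg fun e _ =>
      Finset.prod_nonneg fun i _ => hxnn i
    set y : ℕ → ℝ := fun i => if i = t then 0 else if i = 1 then x 1 + x t else x i
      with hy
    set z : ℕ → ℝ := fun i => if i = 1 then 0 else if i = t then x 1 + x t else x i
      with hz
    have hy1 : y 1 = x 1 + x t := by rw [hy]; simp [h1t]
    have hyt : y t = 0 := by rw [hy]; simp
    have hz1 : z 1 = 0 := by rw [hz]; simp
    have hzt : z t = x 1 + x t := by rw [hz]; simp [h1t.symm]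
    have hyother : ∀ i, i ≠ 1 → i ≠ t → y i = x i := by
      intro i hi1 hit; rw [hy]; simp [hi1, hit]
    have hzother : ∀ i, i ≠ 1 → i ≠ t → z i = x i := by
      intro i hi1 hit; rw [hz]; simp [hi1, hit]
    -- polyValue computations
    have hEA : ∑ e ∈ A, ∏ i ∈ e, x i = x 1 * a := by
      rw [ha, Finset.mul_sum]
      apply Finset.sum_congr rfl
      intro e heA
      rw [Finset.mul_prod_erase e x (Finset.mem_filter.mp heA).2]
    have hEB : ∑ e ∈ B, ∏ i ∈ e, x i = x t * b := by
      rw [hb, Finset.mul_sum]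
      apply Finset.sum_congr rfl
      intro e heB
      rw [Finset.mul_prod_erase e x (Finset.mem_filter.mp heB).2]
    have hpvE : UHypergraph.polyValue G.edges x = x 1 * a + x t * b + s0 := by
      rw [UHypergraph.polyValue, hsumE, hEA, hEB]
    have hCsame : ∀ w : ℕ → ℝ, (∀ i, i ≠ 1 → i ≠ t → w i = x i) →
        ∑ e ∈ C, ∏ i ∈ e, w i = s0 := by
      intro w hw
      rw [hs0]
      apply Finset.sum_congr rfl
      intro e heC
      obtain ⟨heG, h1e, hte⟩ := Finset.mem_filter.mp heC
      apply Finset.prod_congr rfl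
      intro i hi
      exact hw i (fun h => h1e (h ▸ hi)) (fun h => hte (h ▸ hi))
    have hpvGt : UHypergraph.polyValue Gt.edges y = (x 1 + x t) * a + s0 := by
      rw [UHypergraph.polyValue, hsumGt]
      congr 1
      · rw [ha, Finset.mul_sum]
        apply Finset.sum_congr rfl
        intro e heA
        obtain ⟨heG, h1e⟩ := Finset.mem_filter.mp heA
        have hte : t ∉ e := fun h => key e heG h h1e
        rw [← Finset.mul_prod_erase e y h1e, hy1]
        congr 1
        apply Finset.prod_congr rfl
        intro i hi
        exact hyother i (Finset.mem_erase.mp hi).1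
          (fun h => hte (h ▸ (Finset.mem_erase.mp hi).2))
      · exact hCsame y hyother
    have hpvG1 : UHypergraph.polyValue G1.edges z = (x 1 + x t) * b + s0 := by
      rw [UHypergraph.polyValue, hsumG1]
      congr 1
      · rw [hb, Finset.mul_sum]
        apply Finset.sum_congr rfl
        intro e heB
        obtain ⟨heG, hte⟩ := Finset.mem_filter.mp heB
        have h1e : (1:ℕ) ∉ e := key e heG hte
        rw [← Finset.mul_prod_erase e z hte, hzt]
        congr 1
        apply Finset.prod_congr rfl
        intro i hi
        exact hzother i (fun h => h1e (h ▸ (Finset.mem_erase.mp hi).2))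
          (Finset.mem_erase.mp hi).1
      · exact hCsame z hzother
    -- legality of y and z
    have hsum_split : ∑ i ∈ G.verts, x i
        = x 1 + (x t + ∑ i ∈ (G.verts.erase 1).erase t, x i) := by
      rw [Finset.add_sum_erase _ x (Finset.mem_erase.mpr ⟨fun h => h1t h.symm, htv⟩),
        Finset.add_sum_erase _ x h1v]
    have hyleg : Gt.LegalWeighting y := by
      refine ⟨?_, ?_, ?_⟩
      · intro i
        rw [hy]
        dsimp only
        split
        · exact le_refl _
        · split
          · have := hxnn 1; have := hxnn t; linarith
          · exact hxnn i
      · intro i hi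
        by_cases hit : i = t
        · rw [hit, hyt]
        · have hiG : i ∉ G.verts := fun h => hi (Finset.mem_erase.mpr ⟨hit, h⟩)
          have hi1 : i ≠ 1 := fun h => hiG (h ▸ h1v)
          rw [hyother i hi1 hit]
          exact hxs i hiG
      · have h1m : (1:ℕ) ∈ G.verts.erase t := Finset.mem_erase.mpr ⟨h1t, h1v⟩
        have e1 : ∑ i ∈ G.verts.erase t, y i
            = y 1 + ∑ i ∈ (G.verts.erase t).erase 1, y i :=
          (Finset.add_sum_erase _ y h1m).symm
        have e2 : ∑ i ∈ (G.verts.erase t).erase 1, y i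
            = ∑ i ∈ (G.verts.erase 1).erase t, x i := by
          rw [Finset.erase_right_comm]
          apply Finset.sum_congr rfl
          intro i hi
          obtain ⟨hit, hi'⟩ := Finset.mem_erase.mp hi
          exact hyother i (Finset.mem_erase.mp hi').1 hit
        show ∑ i ∈ G.verts.erase t, y i = 1
        rw [e1, e2, hy1]
        rw [hsum_split] at hx1
        linarith
    have hzleg : G1.LegalWeighting z := by
      refine ⟨?_, ?_, ?_⟩
      · intro i
        rw [hz]
        dsimp only
        split
        · exact le_refl _
        · split
          · have := hxnn 1; have := hxnn t; linarith
          · exact hxnn i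
      · intro i hi
        by_cases hi1 : i = 1
        · rw [hi1, hz1]
        · have hiG : i ∉ G.verts := fun h => hi (Finset.mem_erase.mpr ⟨hi1, h⟩)
          have hit : i ≠ t := fun h => hiG (h ▸ htv)
          rw [hzother i hi1 hit]
          exact hxs i hiG
      · have htm : t ∈ G.verts.erase 1 := Finset.mem_erase.mpr ⟨fun h => h1t h.symm, htv⟩
        have e1 : ∑ i ∈ G.verts.erase 1, z i
            = z t + ∑ i ∈ (G.verts.erase 1).erase t, z i :=
          (Finset.add_sum_erase _ z htm).symm
        have e2 : ∑ i ∈ (G.verts.erase 1).erase t, z i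
            = ∑ i ∈ (G.verts.erase 1).erase t, x i := by
          apply Finset.sum_congr rfl
          intro i hi
          obtain ⟨hit, hi'⟩ := Finset.mem_erase.mp hi
          exact hzother i (Finset.mem_erase.mp hi').1 hit
        show ∑ i ∈ G.verts.erase 1, z i = 1
        rw [e1, e2, hzt]
        rw [hsum_split] at hx1
        linarith
    have hyle : (x 1 + x t) * a + s0 ≤ Gt.lagrangian := by
      rw [← hpvGt]; exact UHypergraph.le_lagrangian Gt hyleg
    have hzle : (x 1 + x t) * b + s0 ≤ G1.lagrangian := by
      rw [← hpvG1]; exact UHypergraph.le_lagrangian G1 hzleg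
    rw [hpvE]
    rcases le_total a b with hab | hab
    · have h1 : x 1 * a + x t * b + s0 ≤ (x 1 + x t) * b + s0 := by
        have := hxnn 1
        nlinarith
      calc x 1 * a + x t * b + s0 ≤ (x 1 + x t) * b + s0 := h1
        _ ≤ G1.lagrangian := hzle
        _ ≤ M := le_max_right _ _
    · have h1 : x 1 * a + x t * b + s0 ≤ (x 1 + x t) * a + s0 := by
        have := hxnn t
        nlinarith
      calc x 1 * a + x t * b + s0 ≤ (x 1 + x t) * a + s0 := h1
        _ ≤ Gt.lagrangian := hyle
        _ ≤ M := le_max_left _ _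
  have hfin : G.lagrangian ≤ M :=
    UHypergraph.lagrangian_le G _ hx0leg hbound
  linarith
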